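/- Let O be a Dedekind domain, μ a non-principal ideal with μ² = (z), and suppose μ is prime. Suppose elements ε(1) ∈ O, t ∈ O, c ∈ O, d ∈ μ, d' ∈ O satisfy d = 1 − c·ε(1), c·z = −d·t, d'·z = −d·ε(1), and d'·t = c·ε(1). Then d ∈ (z), i.e. d = z·d̄ for some d̄ ∈ O, and moreover d̄·(z − t·ε(1)) = 1, so both d̄ and z − t·ε(1) are units of O. -/

import Mathlib

/-- Case `ε(X) = 1` (i.e. `ε_X = z`): for a non-principal prime ideal `μ` with
`μ² = (z)` in a Dedekind domain, if `d = 1 − c·ε(1)`, `c·z = −d·t`, `d'·z = −d·ε(1)`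
and `d'·t = c·ε(1)` with `d ∈ μ`, then `d = z·d̄` for some `d̄ ∈ O` with
`d̄·(z − t·ε(1)) = 1`; in particular `d̄` and `z − t·ε(1)` are units of `O`. -/
theorem stmt14 (O : Type*) [CommRing O] [IsDomain O] [IsDedekindDomain O]
    (μ : Ideal O) (hnp : ¬ Submodule.IsPrincipal μ) (hpr : μ.IsPrime)
    (z : O) (hz : z ≠ 0) (hsq : μ * μ = Ideal.span {z})
    (ε1 t c d' : O) (d : O) (hd : d ∈ μ)
    (h1 : d = 1 - c * ε1)
    (h2 : c * z = -(d * t))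
    (h3 : d' * z = -(d * ε1))
    (h4 : d' * t = c * ε1) :
    ∃ dbar : O, d = z * dbar ∧ dbar * (z - t * ε1) = 1 ∧
      IsUnit dbar ∧ IsUnit (z - t * ε1) := by
  have hε1 : ε1 ∉ μ := by
    intro hε
    have : (1 : O) ∈ μ := by
      have : d + c * ε1 ∈ μ := μ.add_mem hd (Ideal.mul_mem_left μ c hε)
      simpa [h1] using this
    exact hpr.ne_top (μ.eq_top_of_isUnit_mem this isUnit_one)
  have hmem : ε1 * d ∈ μ ^ 2 := by
    rw [sq, hsq, Ideal.mem_span_singleton]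
    exact ⟨-d', by rw [mul_comm ε1 d]; linear_combination h3⟩
  have hd2 : d ∈ μ ^ 2 := (hpr.mul_mem_pow μ hmem).resolve_left hε1
  rw [sq, hsq, Ideal.mem_span_singleton] at hd2
  obtain ⟨dbar, hdbar⟩ := hd2
  refine ⟨dbar, hdbar, ?_, ?_, ?_⟩
  · have hc : c = -(dbar * t) := by
      apply mul_right_cancel₀ hz
      linear_combination h2 - t * hdbar
    have : dbar * (z - t * ε1) * z = 1 * z := by
      linear_combination z * h1 - z * hdbar - z * ε1 * hc
    simpa using mul_right_cancel₀ hz this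
  · exact IsUnit.of_mul_eq_one _ (by
      have hc : c = -(dbar * t) := by
        apply mul_right_cancel₀ hz
        linear_combination h2 - t * hdbar
      have : dbar * (z - t * ε1) * z = 1 * z := by
        linear_combination z * h1 - z * hdbar - z * ε1 * hc
      simpa using mul_right_cancel₀ hz this)
  · exact IsUnit.of_mul_eq_one _ (by
      have hc : c = -(dbar * t) := by
        apply mul_right_cancel₀ hz
        linear_combination h2 - t * hdbar
      have : dbar * (z - t * ε1) * z = 1 * z := by
        linear_combination z * h1 - z * hdbar - z * ε1 * hc
      rw [mul_comm (z - t * ε1) dbar]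
      simpa using mul_right_cancel₀ hz this)
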